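/- Let K be a field, E a K-vector space of finite dimension N+1, w a weight function on E, and l_0, …, l_N a basis of E adapted to w. Then for every nonzero x ∈ E, writing x = x_0 l_0 + ⋯ + x_N l_N, one has w(x) = max{ w(l_j) : 0 ≤ j ≤ N, x_j ≠ 0 }. -/

import Mathlib

/-- A weight function on a `K`-vector space `E` is a map `w : E → ℝ ∪ {−∞}` such that
(1) `w x = −∞` iff `x = 0`; (2) `w (t • x) = w x` for all nonzero `t : K`;
(3) `w (x + y) ≤ max (w x) (w y)`. -/
def IsWeightFunction (K : Type*) [Field K] {E : Type*} [AddCommGroup E] [Module K E]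
    (w : E → WithBot ℝ) : Prop :=
  (∀ x : E, w x = ⊥ ↔ x = 0) ∧
  (∀ (t : K) (x : E), t ≠ 0 → w (t • x) = w x) ∧
  (∀ x y : E, w (x + y) ≤ max (w x) (w y))

/-- A basis `b` of `E` is adapted to the weight function `w` if for every `α ∈ ℝ`, the
sublevel subspace `F^α = {x ∈ E : w x ≤ α}` equals the span of `{b j : w (b j) ≤ α}`. -/
def IsAdaptedBasis (K : Type*) [Field K] {E : Type*} [AddCommGroup E] [Module K E]
    {ι : Type*} (w : E → WithBot ℝ) (b : Module.Basis ι K E) : Prop :=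
  ∀ α : ℝ, {x : E | w x ≤ (α : WithBot ℝ)} =
    ↑(Submodule.span K (b '' {j : ι | w (b j) ≤ (α : WithBot ℝ)}))

lemma weight_sum_le {K : Type*} [Field K] {E : Type*} [AddCommGroup E] [Module K E]
    {w : E → WithBot ℝ} (hw : IsWeightFunction K w) {ι : Type*} (t : Finset ι) (f : ι → E) :
    w (∑ j ∈ t, f j) ≤ t.sup fun j => w (f j) := by
  classical
  induction t using Finset.induction with
  | empty => simp [(hw.1 0).2 rfl]
  | insert a s h ih =>
    rw [Finset.sum_insert h, Finset.sup_insert]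
    exact le_trans (hw.2.2 _ _) (max_le_max le_rfl ih)

open Classical in
/-- If `b` is a basis adapted to the weight function `w`, then for every nonzero `x`,
`w x` is the maximum of the weights `w (b j)` over the indices `j` where the coordinate
of `x` is nonzero. -/
theorem weight_eq_max_of_adapted_basis (K : Type*) [Field K] (E : Type*) [AddCommGroup E]
    [Module K E] (N : ℕ) (w : E → WithBot ℝ) (hw : IsWeightFunction K w)
    (b : Module.Basis (Fin (N + 1)) K E) (hb : IsAdaptedBasis K w b) (x : E) (hx : x ≠ 0) :
    w x = (Finset.univ.filter fun j : Fin (N + 1) => b.repr x j ≠ 0).sup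
      fun j => w (b j) := by
  obtain ⟨h1, h2, h3⟩ := hw
  set s := Finset.univ.filter fun j : Fin (N + 1) => b.repr x j ≠ 0 with hs
  apply le_antisymm
  · have hxe : x = ∑ j ∈ s, b.repr x j • b j := by
      rw [hs, Finset.sum_filter]
      have := b.sum_repr x
      rw [← this]
      congr 1
      ext j
      split <;> simp_all
    calc w x = w (∑ j ∈ s, b.repr x j • b j) := by rw [← hxe]
    _ ≤ s.sup fun j => w (b.repr x j • b j) := weight_sum_le ⟨h1, h2, h3⟩ s _
    _ ≤ s.sup fun j => w (b j) := by
        apply Finset.sup_mono_fun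
        intro j hj
        rw [hs, Finset.mem_filter] at hj
        rw [h2 _ _ hj.2]
  · apply Finset.sup_le
    intro j hj
    rw [hs, Finset.mem_filter] at hj
    by_contra hlt
    push_neg at hlt
    have hxne : w x ≠ ⊥ := fun h => hx ((h1 x).1 h)
    obtain ⟨α, hα⟩ : ∃ α : ℝ, w x = (α : WithBot ℝ) := by
      cases h : w x with
      | bot => exact absurd h hxne
      | coe α => exact ⟨α, rfl⟩
    have hmem : x ∈ {y : E | w y ≤ (α : WithBot ℝ)} := le_of_eq hα
    rw [hb α] at hmem
    have := (b.mem_span_image.1 hmem) (Finsupp.mem_support_iff.2 hj.2)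
    have : w (b j) ≤ (α : WithBot ℝ) := this
    exact absurd (lt_of_le_of_lt this (hα ▸ hlt)) (lt_irrefl _)
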